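/- Let G be a graph and let m be a positive multiple of 3. If H is obtained from G and the path P_m by joining a pendant vertex of P_m to a vertex of G by an edge, then m_H(1) = m_G(1). -/

import Mathlib

open SimpleGraph Matrix Polynomial

/-- The Laplacian matrix of a simple graph over `ℝ`. -/
noncomputable def lapR {V : Type} [Fintype V] [DecidableEq V] (G : SimpleGraph V) :
    Matrix V V ℝ :=
  letI := Classical.decRel G.Adj
  G.lapMatrix ℝ

/-- The multiset of Laplacian eigenvalues of a graph, counted with multiplicity,
given as the roots of the characteristic polynomial of the Laplacian matrix. -/
noncomputable def lapEigs {V : Type} [Fintype V] [DecidableEq V] (G : SimpleGraph V) :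
    Multiset ℝ :=
  (lapR G).charpoly.roots

/-- `m_G[0,1)`: the number of Laplacian eigenvalues of `G` in `[0,1)`, with multiplicity. -/
noncomputable def mIco01 {V : Type} [Fintype V] [DecidableEq V] (G : SimpleGraph V) : ℕ :=
  letI : DecidablePred (fun x : ℝ => 0 ≤ x ∧ x < 1) := Classical.decPred _
  Multiset.card ((lapEigs G).filter (fun x => 0 ≤ x ∧ x < 1))

/-- `m_G(μ)`: the multiplicity of `μ` as a Laplacian eigenvalue of `G`. -/
noncomputable def mEig {V : Type} [Fintype V] [DecidableEq V] (G : SimpleGraph V) (μ : ℝ) : ℕ :=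
  Multiset.count μ (lapEigs G)

/-- The graph obtained from `G` and the path `P_m` by joining a pendant (end) vertex of `P_m`
to the vertex `v` of `G` by an edge. The path vertices are `Sum.inr 0, …, Sum.inr (m-1)` with
edges `i ↔ i+1`, and the new edge joins `Sum.inl v` to the end vertex `Sum.inr 0`. -/
def attachPath {V : Type} (G : SimpleGraph V) (v : V) (m : ℕ) : SimpleGraph (V ⊕ Fin m) :=
  SimpleGraph.fromRel (fun a b =>
    (∃ x y : V, a = Sum.inl x ∧ b = Sum.inl y ∧ G.Adj x y) ∨
    (∃ i j : Fin m, a = Sum.inr i ∧ b = Sum.inr j ∧ (i : ℕ) + 1 = (j : ℕ)) ∨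
    (∃ i : Fin m, a = Sum.inl v ∧ b = Sum.inr i ∧ (i : ℕ) = 0))

set_option linter.unusedSectionVars false
set_option linter.unreachableTactic false
set_option linter.unusedTactic false

section SpectralCounting


variable {n : Type} [Fintype n] [DecidableEq n]

lemma charmatrix_conj (U D : Matrix n n ℝ) (hU : U * star U = 1) :
    charmatrix (U * D * star U) =
      (C : ℝ →+* ℝ[X]).mapMatrix U * charmatrix D * (C : ℝ →+* ℝ[X]).mapMatrix (star U) := by
  rw [charmatrix, charmatrix]
  simp only [mul_sub, sub_mul]
  congr 1
  · have h1 : Commute (Matrix.scalar n (X : ℝ[X])) ((C : ℝ →+* ℝ[X]).mapMatrix U) :=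
      Matrix.scalar_commute _ (fun r' => Commute.all _ _) _
    rw [← h1.eq, Matrix.mul_assoc, ← map_mul ((C : ℝ →+* ℝ[X]).mapMatrix), hU,
      RingHom.map_one, Matrix.mul_one]
  · rw [← map_mul ((C : ℝ →+* ℝ[X]).mapMatrix), ← map_mul ((C : ℝ →+* ℝ[X]).mapMatrix)]

lemma charpoly_conj (U D : Matrix n n ℝ) (hU : U * star U = 1) :
    (U * D * star U).charpoly = D.charpoly := by
  rw [Matrix.charpoly, Matrix.charpoly, charmatrix_conj U D hU, det_mul, det_mul,
    mul_right_comm, ← det_mul, ← map_mul ((C : ℝ →+* ℝ[X]).mapMatrix), hU,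
    RingHom.map_one, det_one, one_mul]

lemma charpoly_diag (w : n → ℝ) :
    (Matrix.diagonal w).charpoly = ∏ i, (X - C (w i)) := by
  rw [Matrix.charpoly]
  have : charmatrix (Matrix.diagonal w) = Matrix.diagonal (fun i => (X : ℝ[X]) - C (w i)) := by
    ext i j
    by_cases h : i = j
    · subst h; simp
    · simp [charmatrix_apply_ne _ _ _ h, Matrix.diagonal_apply_ne _ h]
  rw [this, det_diagonal]

lemma count_roots_add_rank (A : Matrix n n ℝ) (hA : A.IsHermitian) (μ : ℝ) :
    Multiset.count μ A.charpoly.roots + (A - μ • (1 : Matrix n n ℝ)).rank = Fintype.card n := by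
  classical
  have hUU : (hA.eigenvectorUnitary : Matrix n n ℝ) * star (hA.eigenvectorUnitary : Matrix n n ℝ) = 1 :=
    Unitary.mul_star_self_of_mem hA.eigenvectorUnitary.2
  have hspec := hA.spectral_theorem
  have hco : (RCLike.ofReal ∘ hA.eigenvalues : n → ℝ) = hA.eigenvalues := by
    funext i; simp [RCLike.ofReal]
  rw [hco] at hspec
  rw [Unitary.conjStarAlgAut_apply] at hspec
  -- count part
  have hcp : A.charpoly = ∏ i, (X - C (hA.eigenvalues i)) := by
    conv_lhs => rw [hspec]
    rw [charpoly_conj _ _ hUU, charpoly_diag]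
  have hroots : A.charpoly.roots = Finset.univ.val.map hA.eigenvalues := by
    rw [hcp]
    have : ∏ i, (X - C (hA.eigenvalues i))
        = ((Finset.univ.val.map hA.eigenvalues).map fun a => X - C a).prod := by
      rw [Multiset.map_map]; rfl
    rw [this, Polynomial.roots_multiset_prod_X_sub_C]
  have hcount : Multiset.count μ A.charpoly.roots
      = (Finset.univ.filter (fun i => hA.eigenvalues i = μ)).card := by
    rw [hroots, Multiset.count_map]
    rw [Finset.card_filter]
    simp only [Finset.sum_boole]
    rw [Multiset.filter_congr (fun a _ => by constructor <;> exact fun h => h.symm)]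
    simp [Finset.filter]
  -- rank part
  have hdiagsub : Matrix.diagonal (fun i => hA.eigenvalues i - μ)
      = Matrix.diagonal hA.eigenvalues - μ • (1 : Matrix n n ℝ) := by
    ext i j
    by_cases h : i = j
    · subst h; simp [Matrix.diagonal_apply_eq, Matrix.one_apply]
    · simp [Matrix.diagonal_apply_ne _ h, Matrix.one_apply_ne h]
  have hsub : A - μ • (1 : Matrix n n ℝ)
      = (hA.eigenvectorUnitary : Matrix n n ℝ) * Matrix.diagonal (fun i => hA.eigenvalues i - μ)
        * star (hA.eigenvectorUnitary : Matrix n n ℝ) := by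
    rw [hdiagsub, Matrix.mul_sub, Matrix.sub_mul, ← hspec]
    congr 1
    rw [Matrix.mul_smul, Matrix.smul_mul, Matrix.mul_one, hUU]
  have hdetU : IsUnit ((hA.eigenvectorUnitary : Matrix n n ℝ)).det := by
    apply IsUnit.of_mul_eq_one (star (hA.eigenvectorUnitary : Matrix n n ℝ)).det
    rw [← det_mul, hUU, det_one]
  have hdetU' : IsUnit ((star (hA.eigenvectorUnitary : Matrix n n ℝ))).det := by
    apply IsUnit.of_mul_eq_one ((hA.eigenvectorUnitary : Matrix n n ℝ)).det
    rw [← det_mul, Unitary.star_mul_self_of_mem hA.eigenvectorUnitary.2, det_one]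
  have hrank : (A - μ • (1 : Matrix n n ℝ)).rank
      = Fintype.card {i // hA.eigenvalues i - μ ≠ 0} := by
    rw [hsub, Matrix.rank_mul_eq_left_of_isUnit_det _ _ hdetU',
      Matrix.rank_mul_eq_right_of_isUnit_det _ _ hdetU, Matrix.rank_diagonal]
  rw [hcount, hrank, Fintype.card_subtype]
  have : ∀ i, (hA.eigenvalues i - μ ≠ 0) ↔ ¬ (hA.eigenvalues i = μ) := by
    intro i; rw [sub_ne_zero]
  rw [Finset.filter_congr (fun i _ => this i)]
  exact Finset.card_filter_add_card_filter_not _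

lemma count_eq_finrank_ker (A : Matrix n n ℝ) (hA : A.IsHermitian) (μ : ℝ) :
    Multiset.count μ A.charpoly.roots
      = Module.finrank ℝ (LinearMap.ker (A - μ • (1 : Matrix n n ℝ)).mulVecLin) := by
  have h1 := count_roots_add_rank A hA μ
  have h2 : (A - μ • (1 : Matrix n n ℝ)).rank
      + Module.finrank ℝ (LinearMap.ker (A - μ • (1 : Matrix n n ℝ)).mulVecLin)
      = Fintype.card n := by
    rw [Matrix.rank, LinearMap.finrank_range_add_finrank_ker,
      Module.finrank_fintype_fun_eq_card]
  omega
end SpectralCounting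

open scoped Classical in
lemma lapR_mulVec {V : Type} [Fintype V] [DecidableEq V] (G : SimpleGraph V) (x : V → ℝ)
    (i : V) :
    (lapR G).mulVec x i = ∑ j, if G.Adj i j then x i - x j else 0 := by
  classical
  unfold lapR
  letI := Classical.decRel G.Adj
  rw [lapMatrix_mulVec_apply]
  rw [SimpleGraph.degree, SimpleGraph.neighborFinset_eq_filter, Finset.card_filter,
    Finset.sum_filter]
  push_cast
  rw [Finset.sum_mul, ← Finset.sum_sub_distrib]
  apply Finset.sum_congr rfl
  intro j _
  by_cases h : G.Adj i j <;> simp [h]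


variable {V : Type} (G : SimpleGraph V) (v : V) (m : ℕ)

lemma attach_adj_inl_inl (a b : V) :
    (attachPath G v m).Adj (Sum.inl a) (Sum.inl b) ↔ G.Adj a b := by
  simp only [attachPath, SimpleGraph.fromRel_adj]
  constructor
  · rintro ⟨hne, h | h⟩ <;> rcases h with (⟨x,y,hx,hy,hadj⟩|⟨i,j,hi,hj,_⟩|⟨i,hi,hj,_⟩) <;>
      simp_all
    · exact hadj.symm
  · intro h
    exact ⟨by simpa using h.ne, Or.inl (Or.inl ⟨a, b, rfl, rfl, h⟩)⟩

lemma attach_adj_inl_inr (a : V) (i : Fin m) :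
    (attachPath G v m).Adj (Sum.inl a) (Sum.inr i) ↔ a = v ∧ (i : ℕ) = 0 := by
  simp only [attachPath, SimpleGraph.fromRel_adj]
  constructor
  · rintro ⟨hne, h | h⟩ <;> rcases h with (⟨x,y,hx,hy,hadj⟩|⟨i',j,hi,hj,_⟩|⟨i',hi,hj,h0⟩) <;>
      simp_all
  · rintro ⟨rfl, h0⟩
    exact ⟨by simp, Or.inl (Or.inr (Or.inr ⟨i, rfl, rfl, h0⟩))⟩

lemma attach_adj_inr_inl (a : V) (i : Fin m) :
    (attachPath G v m).Adj (Sum.inr i) (Sum.inl a) ↔ a = v ∧ (i : ℕ) = 0 := by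
  rw [SimpleGraph.adj_comm, attach_adj_inl_inr]

lemma attach_adj_inr_inr (i j : Fin m) :
    (attachPath G v m).Adj (Sum.inr i) (Sum.inr j) ↔
      ((i : ℕ) + 1 = (j : ℕ) ∨ (j : ℕ) + 1 = (i : ℕ)) := by
  simp only [attachPath, SimpleGraph.fromRel_adj]
  constructor
  · rintro ⟨hne, h | h⟩ <;> rcases h with (⟨x,y,hx,hy,hadj⟩|⟨i',j',hi,hj,he⟩|⟨i',hi,hj,_⟩) <;>
      simp_all
  · rintro (h | h)
    · refine ⟨?_, Or.inl (Or.inr (Or.inl ⟨i, j, rfl, rfl, h⟩))⟩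
      simp only [ne_eq, Sum.inr.injEq]
      intro hij; rw [hij] at h; omega
    · refine ⟨?_, Or.inr (Or.inr (Or.inl ⟨j, i, rfl, rfl, h⟩))⟩
      simp only [ne_eq, Sum.inr.injEq]
      intro hij; rw [hij] at h; omega

/-- Periodic pattern `1, 0, -1, -1, 0, 1` of period 6. -/
noncomputable def pat (k : ℕ) : ℝ :=
  if k % 6 = 0 then 1 else if k % 6 = 1 then 0 else if k % 6 = 2 then -1
  else if k % 6 = 3 then -1 else if k % 6 = 4 then 0 else 1

lemma pat_rec (k : ℕ) : pat (k + 2) = pat (k + 1) - pat k := by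
  have h : k % 6 = 0 ∨ k % 6 = 1 ∨ k % 6 = 2 ∨ k % 6 = 3 ∨ k % 6 = 4 ∨ k % 6 = 5 := by omega
  rcases h with h|h|h|h|h|h <;>
  · have e1 : (k + 1) % 6 = (k % 6 + 1) % 6 := by omega
    have e2 : (k + 2) % 6 = (k % 6 + 2) % 6 := by omega
    rw [pat, pat, pat, e1, e2, h]
    norm_num

open scoped Classical in
lemma mem_ker_iff {V : Type} [Fintype V] [DecidableEq V] (G : SimpleGraph V) (x : V → ℝ) :
    x ∈ LinearMap.ker ((lapR G - (1:ℝ) • (1 : Matrix V V ℝ)).mulVecLin) ↔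
      ∀ i, (∑ j, if G.Adj i j then x i - x j else 0) = x i := by
  rw [LinearMap.mem_ker, Matrix.mulVecLin_apply, Matrix.sub_mulVec, sub_eq_zero]
  rw [Matrix.smul_mulVec, Matrix.one_mulVec, one_smul]
  rw [funext_iff]
  constructor
  · intro h i; rw [← lapR_mulVec]; exact h i
  · intro h i; rw [lapR_mulVec]; exact h i

open scoped Classical in
lemma lhs_inl {V : Type} [Fintype V] [DecidableEq V] (G : SimpleGraph V) (v : V)
    (m : ℕ) (hm : 0 < m) (x : V ⊕ Fin m → ℝ) (a : V) :
    (∑ w, if (attachPath G v m).Adj (Sum.inl a) w then x (Sum.inl a) - x w else 0)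
      = (∑ b, if G.Adj a b then x (Sum.inl a) - x (Sum.inl b) else 0)
        + (if a = v then x (Sum.inl v) - x (Sum.inr ⟨0, hm⟩) else 0) := by
  rw [Fintype.sum_sum_type]
  congr 1
  · apply Finset.sum_congr rfl
    intro b _
    exact if_congr (attach_adj_inl_inl G v m a b) rfl rfl
  · by_cases hav : a = v
    · subst hav
      rw [if_pos rfl]
      have hiff : ∀ i : Fin m, ((attachPath G a m).Adj (Sum.inl a) (Sum.inr i)) ↔
          i = ⟨0, hm⟩ := by
        intro i
        rw [attach_adj_inl_inr, Fin.ext_iff]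
        simp
      rw [Finset.sum_congr rfl (fun i _ => by rw [if_congr (hiff i) rfl rfl])]
      rw [Finset.sum_ite_eq' Finset.univ (⟨0, hm⟩ : Fin m)
        (fun i => x (Sum.inl a) - x (Sum.inr i))]
      simp
    · rw [if_neg hav]
      apply Finset.sum_eq_zero
      intro i _
      rw [if_neg]
      rw [attach_adj_inl_inr]
      exact fun hc => hav hc.1

open scoped Classical in
lemma lhs_inr {V : Type} [Fintype V] [DecidableEq V] (G : SimpleGraph V) (v : V)
    (m : ℕ) (x : V ⊕ Fin m → ℝ) (i : Fin m) :
    (∑ w, if (attachPath G v m).Adj (Sum.inr i) w then x (Sum.inr i) - x w else 0)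
      = (if (i : ℕ) = 0 then x (Sum.inr i) - x (Sum.inl v) else 0)
        + (∑ j : Fin m, if ((i : ℕ) + 1 = (j : ℕ) ∨ (j : ℕ) + 1 = (i : ℕ))
            then x (Sum.inr i) - x (Sum.inr j) else 0) := by
  rw [Fintype.sum_sum_type]
  congr 1
  · by_cases h0 : (i : ℕ) = 0
    · rw [if_pos h0]
      have hiff : ∀ a : V, ((attachPath G v m).Adj (Sum.inr i) (Sum.inl a)) ↔ a = v := by
        intro a; rw [attach_adj_inr_inl]; simp [h0]
      rw [Finset.sum_congr rfl (fun a _ => by rw [if_congr (hiff a) rfl rfl])]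
      rw [Finset.sum_ite_eq' Finset.univ v (fun a => x (Sum.inr i) - x (Sum.inl a))]
      simp
    · rw [if_neg h0]
      apply Finset.sum_eq_zero
      intro a _
      rw [if_neg]
      rw [attach_adj_inr_inl]
      exact fun hc => h0 hc.2
  · apply Finset.sum_congr rfl
    intro j _
    exact if_congr (attach_adj_inr_inr G v m i j) rfl rfl

open scoped Classical in
lemma ker_attach_iff {V : Type} [Fintype V] [DecidableEq V] (G : SimpleGraph V) (v : V)
    (m : ℕ) (hm : 0 < m) (x : V ⊕ Fin m → ℝ) :
    x ∈ LinearMap.ker ((lapR (attachPath G v m)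
        - (1:ℝ) • (1 : Matrix (V ⊕ Fin m) (V ⊕ Fin m) ℝ)).mulVecLin) ↔
      (∀ a : V, (∑ b, if G.Adj a b then x (Sum.inl a) - x (Sum.inl b) else 0)
          + (if a = v then x (Sum.inl v) - x (Sum.inr ⟨0, hm⟩) else 0) = x (Sum.inl a))
      ∧ (∀ i : Fin m,
          (if (i : ℕ) = 0 then x (Sum.inr i) - x (Sum.inl v) else 0)
          + (∑ j : Fin m, if ((i : ℕ) + 1 = (j : ℕ) ∨ (j : ℕ) + 1 = (i : ℕ))
              then x (Sum.inr i) - x (Sum.inr j) else 0)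
          = x (Sum.inr i)) := by
  rw [mem_ker_iff]
  constructor
  · intro h
    refine ⟨fun a => ?_, fun i => ?_⟩
    · rw [← lhs_inl G v m hm x a]; exact h (Sum.inl a)
    · rw [← lhs_inr G v m x i]; exact h (Sum.inr i)
  · rintro ⟨h1, h2⟩ u
    rcases u with a | i
    · rw [lhs_inl G v m hm x a]; exact h1 a
    · rw [lhs_inr G v m x i]; exact h2 i

open scoped Classical in
lemma sum_ite_eq_single {m : ℕ} (c : Fin m → ℝ) (Q : Fin m → Prop) [DecidablePred Q] (a : Fin m)
    (h : ∀ j, Q j ↔ j = a) : (∑ j, if Q j then c j else 0) = c a := by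
  rw [Finset.sum_congr rfl (fun j _ => if_congr (h j) rfl rfl),
    Finset.sum_ite_eq' Finset.univ a c]
  simp

open scoped Classical in
lemma sum_ite_eq_pair {m : ℕ} (c : Fin m → ℝ) (Q : Fin m → Prop) [DecidablePred Q] (a b : Fin m) (hab : a ≠ b)
    (h : ∀ j, Q j ↔ (j = a ∨ j = b)) : (∑ j, if Q j then c j else 0) = c a + c b := by
  have e : ∀ j : Fin m, (if Q j then c j else 0)
      = (if j = a then c j else 0) + (if j = b then c j else 0) := by
    intro j
    by_cases ha : j = a
    · subst ha
      rw [if_pos ((h j).2 (Or.inl rfl)), if_pos rfl, if_neg hab]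
      ring
    · by_cases hb : j = b
      · subst hb
        rw [if_pos ((h j).2 (Or.inr rfl)), if_neg ha, if_pos rfl]
        ring
      · rw [if_neg (fun hq => by rcases (h j).1 hq with h'|h' <;> simp_all), if_neg ha,
          if_neg hb]
        ring
  rw [Finset.sum_congr rfl (fun j _ => e j), Finset.sum_add_distrib,
    Finset.sum_ite_eq' Finset.univ a c, Finset.sum_ite_eq' Finset.univ b c]
  simp

section PathValues

variable {V : Type} [Fintype V] [DecidableEq V] (G : SimpleGraph V) (v : V) (m : ℕ)

open scoped Classical in
lemma path_values (hm : 0 < m) (h3 : 3 ∣ m) (x : V ⊕ Fin m → ℝ)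
    (h2 : ∀ i : Fin m,
        (if (i : ℕ) = 0 then x (Sum.inr i) - x (Sum.inl v) else 0)
        + (∑ j : Fin m, if ((i : ℕ) + 1 = (j : ℕ) ∨ (j : ℕ) + 1 = (i : ℕ))
            then x (Sum.inr i) - x (Sum.inr j) else 0)
        = x (Sum.inr i)) :
    ∀ i : Fin m, x (Sum.inr i) = pat (i : ℕ) * x (Sum.inl v) := by
  have hm3 : 3 ≤ m := Nat.le_of_dvd hm h3
  set E : ℕ → ℝ := fun k => if h : k < m then x (Sum.inr ⟨k, h⟩) else 0 with hE
  have hEi : ∀ i : Fin m, x (Sum.inr i) = E (i : ℕ) := by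
    intro i
    simp [hE, i.isLt]
  set yv : ℝ := x (Sum.inl v) with hyv
  -- top condition
  have htop : E (m - 2) = 0 := by
    have h := h2 ⟨m - 1, by omega⟩
    rw [if_neg (by simp; omega)] at h
    rw [sum_ite_eq_single (fun j => x (Sum.inr ⟨m - 1, by omega⟩) - x (Sum.inr j)) _
      ⟨m - 2, by omega⟩ (fun j => by
        have hj := j.isLt
        simp only [Fin.ext_iff, Fin.val_mk]
        omega)] at h
    simp only [hEi, Fin.val_mk] at h
    linarith
  -- bottom condition
  have h01 : E 1 = E 0 - yv := by
    have h := h2 ⟨0, by omega⟩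
    rw [if_pos (by simp)] at h
    rw [sum_ite_eq_single (fun j => x (Sum.inr ⟨0, by omega⟩) - x (Sum.inr j)) _
      ⟨1, by omega⟩ (fun j => by
        have hj := j.isLt
        simp only [Fin.ext_iff, Fin.val_mk]
        omega)] at h
    simp only [hEi, Fin.val_mk] at h
    linarith
  -- recurrence
  have hrec : ∀ k : ℕ, 1 ≤ k → k + 1 < m → E (k + 1) = E k - E (k - 1) := by
    intro k hk1 hk2
    have h := h2 ⟨k, by omega⟩
    rw [if_neg (by simp; omega)] at h
    rw [sum_ite_eq_pair (fun j => x (Sum.inr ⟨k, by omega⟩) - x (Sum.inr j)) _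
      ⟨k + 1, by omega⟩ ⟨k - 1, by omega⟩ (by simp [Fin.ext_iff]; omega)
      (fun j => by
        have hj := j.isLt
        simp only [Fin.ext_iff, Fin.val_mk]
        omega)] at h
    simp only [hEi, Fin.val_mk] at h
    linarith
  -- closed form from the top
  have hform : ∀ j, j < m → E (m - 1 - j) = pat j * E (m - 1) := by
    intro j
    induction j using Nat.strong_induction_on with
    | _ j ih =>
      intro hj
      match j with
      | 0 =>
        simp [pat]
      | 1 =>
        have e1 : m - 1 - 1 = m - 2 := by omega
        rw [e1, htop]
        rw [show pat 1 = 0 by norm_num [pat]]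
        ring
      | (j' + 2) =>
        have hk := hrec (m - 2 - j') (by omega) (by omega)
        have a1 : m - 2 - j' + 1 = m - 1 - j' := by omega
        have a2 : m - 2 - j' - 1 = m - 1 - (j' + 2) := by omega
        have a3 : m - 2 - j' = m - 1 - (j' + 1) := by omega
        rw [a1, a2, a3] at hk
        have i1 := ih j' (by omega) (by omega)
        have i2 := ih (j' + 1) (by omega) (by omega)
        rw [i1, i2] at hk
        have : E (m - 1 - (j' + 2)) = pat (j' + 1) * E (m - 1) - pat j' * E (m - 1) := by
          linarith
        rw [this, pat_rec]
        ring
  have hT : pat (m - 2) * E (m - 1) = pat (m - 1) * E (m - 1) - yv := by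
    have h0 := hform (m - 1) (by omega)
    have h1 := hform (m - 2) (by omega)
    rw [show m - 1 - (m - 1) = 0 by omega] at h0
    rw [show m - 1 - (m - 2) = 1 by omega] at h1
    linarith
  have pat_cast : ∀ a b : ℕ, a % 6 = b % 6 → pat a = pat b := by
    intro a b hab
    rw [pat, pat, hab]
  intro i
  have hi : (i : ℕ) < m := i.isLt
  rw [hEi i]
  have hx : E (i : ℕ) = pat (m - 1 - (i : ℕ)) * E (m - 1) := by
    have := hform (m - 1 - (i : ℕ)) (by omega)
    rw [show m - 1 - (m - 1 - (i : ℕ)) = (i : ℕ) by omega] at this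
    exact this
  rw [hx]
  have hrr : (i : ℕ) % 6 < 6 := Nat.mod_lt _ (by norm_num)
  have hpi : pat (i : ℕ) = pat ((i : ℕ) % 6) := pat_cast _ _ (by omega)
  have h6 : m % 6 = 0 ∨ m % 6 = 3 := by omega
  rcases h6 with h6 | h6
  · have hT' : E (m - 1) = yv := by
      rw [pat_cast (m - 2) 4 (by omega), pat_cast (m - 1) 5 (by omega)] at hT
      norm_num [pat] at hT
      linarith
    rw [hT', hpi, pat_cast (m - 1 - (i : ℕ)) (11 - (i : ℕ) % 6) (by omega)]
    have hc : (i : ℕ) % 6 = 0 ∨ (i : ℕ) % 6 = 1 ∨ (i : ℕ) % 6 = 2 ∨ (i : ℕ) % 6 = 3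
        ∨ (i : ℕ) % 6 = 4 ∨ (i : ℕ) % 6 = 5 := by omega
    rcases hc with h|h|h|h|h|h <;> rw [h] <;> norm_num [pat]
  · have hT' : E (m - 1) = -yv := by
      rw [pat_cast (m - 2) 1 (by omega), pat_cast (m - 1) 2 (by omega)] at hT
      norm_num [pat] at hT
      linarith
    rw [hT', hpi, pat_cast (m - 1 - (i : ℕ)) (8 - (i : ℕ) % 6) (by omega)]
    have hc : (i : ℕ) % 6 = 0 ∨ (i : ℕ) % 6 = 1 ∨ (i : ℕ) % 6 = 2 ∨ (i : ℕ) % 6 = 3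
        ∨ (i : ℕ) % 6 = 4 ∨ (i : ℕ) % 6 = 5 := by omega
    rcases hc with h|h|h|h|h|h <;> rw [h] <;> norm_num [pat] <;> ring

end PathValues

lemma pat_congr {a b : ℕ} (h : a % 6 = b % 6) : pat a = pat b := by
  rw [pat, pat, h]

lemma pat_m2 {m : ℕ} (h3 : 3 ∣ m) (hm : 3 ≤ m) : pat (m - 2) = 0 := by
  have h6 : m % 6 = 0 ∨ m % 6 = 3 := by omega
  rcases h6 with h | h
  · rw [pat_congr (show (m - 2) % 6 = 4 % 6 by omega)]; norm_num [pat]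
  · rw [pat_congr (show (m - 2) % 6 = 1 % 6 by omega)]; norm_num [pat]

open scoped Classical in
lemma ext_mem {V : Type} [Fintype V] [DecidableEq V] (G : SimpleGraph V) (v : V) (m : ℕ)
    (hm : 0 < m) (h3 : 3 ∣ m) (y : V → ℝ)
    (hy : ∀ a, (∑ b, if G.Adj a b then y a - y b else 0) = y a) :
    (Sum.elim y (fun i : Fin m => pat (i : ℕ) * y v)) ∈
      LinearMap.ker ((lapR (attachPath G v m)
        - (1:ℝ) • (1 : Matrix (V ⊕ Fin m) (V ⊕ Fin m) ℝ)).mulVecLin) := by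
  have hm3 : 3 ≤ m := Nat.le_of_dvd hm h3
  rw [ker_attach_iff G v m hm]
  constructor
  · intro a
    simp only [Sum.elim_inl, Sum.elim_inr, Fin.val_mk]
    by_cases hav : a = v
    · rw [if_pos hav, show pat 0 = (1:ℝ) by norm_num [pat]]
      rw [show y v - 1 * y v = 0 by ring, add_zero]
      exact hy a
    · rw [if_neg hav, add_zero]
      exact hy a
  · intro i
    have hi : (i : ℕ) < m := i.isLt
    have hc : (i : ℕ) = 0 ∨ (1 ≤ (i : ℕ) ∧ (i : ℕ) + 1 < m) ∨ (i : ℕ) = m - 1 := by omega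
    rcases hc with h0 | ⟨ha, hb⟩ | htop
    · rw [if_pos h0]
      rw [sum_ite_eq_single
        (fun j => Sum.elim y (fun i : Fin m => pat (i : ℕ) * y v) (Sum.inr i)
          - Sum.elim y (fun i : Fin m => pat (i : ℕ) * y v) (Sum.inr j)) _
        ⟨1, by omega⟩ (fun j => by
          have := j.isLt
          simp only [Fin.ext_iff, Fin.val_mk]
          omega)]
      simp only [Sum.elim_inr, Sum.elim_inl, Fin.val_mk, h0]
      norm_num [pat]
    · rw [if_neg (by omega)]
      rw [sum_ite_eq_pair
        (fun j => Sum.elim y (fun i : Fin m => pat (i : ℕ) * y v) (Sum.inr i)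
          - Sum.elim y (fun i : Fin m => pat (i : ℕ) * y v) (Sum.inr j)) _
        ⟨(i : ℕ) + 1, by omega⟩ ⟨(i : ℕ) - 1, by omega⟩
        (by simp only [ne_eq, Fin.ext_iff, Fin.val_mk]; omega)
        (fun j => by
          have := j.isLt
          simp only [Fin.ext_iff, Fin.val_mk]
          omega)]
      simp only [Sum.elim_inr, Fin.val_mk]
      have hp := pat_rec ((i : ℕ) - 1)
      rw [show (i : ℕ) - 1 + 2 = (i : ℕ) + 1 by omega,
        show (i : ℕ) - 1 + 1 = (i : ℕ) by omega] at hp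
      rw [hp]
      ring
    · rw [if_neg (by omega)]
      rw [sum_ite_eq_single
        (fun j => Sum.elim y (fun i : Fin m => pat (i : ℕ) * y v) (Sum.inr i)
          - Sum.elim y (fun i : Fin m => pat (i : ℕ) * y v) (Sum.inr j)) _
        ⟨m - 2, by omega⟩ (fun j => by
          have := j.isLt
          simp only [Fin.ext_iff, Fin.val_mk]
          omega)]
      simp only [Sum.elim_inr, Fin.val_mk, htop]
      rw [pat_m2 h3 hm3]
      ring

open scoped Classical in
lemma res_mem {V : Type} [Fintype V] [DecidableEq V] (G : SimpleGraph V) (v : V) (m : ℕ)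
    (hm : 0 < m) (h3 : 3 ∣ m) (x : V ⊕ Fin m → ℝ)
    (hx : x ∈ LinearMap.ker ((lapR (attachPath G v m)
        - (1:ℝ) • (1 : Matrix (V ⊕ Fin m) (V ⊕ Fin m) ℝ)).mulVecLin)) :
    (fun a => x (Sum.inl a)) ∈
      LinearMap.ker ((lapR G - (1:ℝ) • (1 : Matrix V V ℝ)).mulVecLin) := by
  obtain ⟨c1, c2⟩ := (ker_attach_iff G v m hm x).1 hx
  have pv := path_values v m hm h3 x c2
  rw [mem_ker_iff]
  intro a
  have h0 : x (Sum.inr ⟨0, hm⟩) = x (Sum.inl v) := by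
    rw [pv ⟨0, hm⟩]
    norm_num [pat]
  have := c1 a
  by_cases hav : a = v
  · rw [if_pos hav, h0, sub_self, add_zero] at this
    exact this
  · rw [if_neg hav, add_zero] at this
    exact this

noncomputable def kerEquiv {V : Type} [Fintype V] [DecidableEq V] (G : SimpleGraph V) (v : V)
    (m : ℕ) (hm : 0 < m) (h3 : 3 ∣ m) :
    LinearMap.ker ((lapR (attachPath G v m)
        - (1:ℝ) • (1 : Matrix (V ⊕ Fin m) (V ⊕ Fin m) ℝ)).mulVecLin) ≃ₗ[ℝ]
    LinearMap.ker ((lapR G - (1:ℝ) • (1 : Matrix V V ℝ)).mulVecLin) where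
  toFun x := ⟨fun a => x.1 (Sum.inl a), res_mem G v m hm h3 x.1 x.2⟩
  map_add' x y := rfl
  map_smul' c x := rfl
  invFun y := ⟨Sum.elim y.1 (fun i : Fin m => pat (i : ℕ) * y.1 v),
    by
      apply ext_mem G v m hm h3 y.1
      have := (mem_ker_iff G y.1).1 y.2
      exact this⟩
  left_inv x := by
    apply Subtype.ext
    obtain ⟨c1, c2⟩ := (ker_attach_iff G v m hm x.1).1 x.2
    have pv := path_values v m hm h3 x.1 c2
    funext u
    cases u with
    | inl a => rfl
    | inr i => exact (pv i).symm
  right_inv y := by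
    apply Subtype.ext
    funext a
    rfl

lemma lapR_isHermitian {V : Type} [Fintype V] [DecidableEq V] (G : SimpleGraph V) :
    (lapR G).IsHermitian := by
  letI := Classical.decRel G.Adj
  show (G.lapMatrix ℝ).IsHermitian
  rw [Matrix.IsHermitian, Matrix.conjTranspose_eq_transpose_of_trivial]
  exact G.isSymm_lapMatrix (R := ℝ)

/-- Attaching a path `P_m`, with `m` a positive multiple of `3`, by an edge to a vertex of
`G` does not change the multiplicity of `1` as a Laplacian eigenvalue. -/
theorem attach_Pm_eigenvalue_one {V : Type} [Fintype V] [DecidableEq V]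
    (G : SimpleGraph V) (v : V) (m : ℕ) (hm : 0 < m) (h3 : 3 ∣ m) :
    mEig (attachPath G v m) 1 = mEig G 1 := by
  have hHer1 : (lapR (attachPath G v m)).IsHermitian := lapR_isHermitian _
  have hHer2 : (lapR G).IsHermitian := lapR_isHermitian _
  show Multiset.count 1 (lapEigs (attachPath G v m)) = Multiset.count 1 (lapEigs G)
  rw [lapEigs, lapEigs, count_eq_finrank_ker _ hHer1 1, count_eq_finrank_ker _ hHer2 1]
  exact LinearEquiv.finrank_eq (kerEquiv G v m hm h3)
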